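/- For every real s ≥ 0, the minimal weighted deviations tend to the theoretical lower bound: lim_{n→∞} m(n,s) = 1. -/

import Mathlib

set_option maxHeartbeats 1000000

open Polynomial Filter
open scoped NNReal ENNReal

/-- The weighted sup of `|z-1|^s * |P(z)|` over the unit circle. -/
noncomputable def circleSup (s : ℝ) (P : Polynomial ℂ) : ℝ :=
  sSup {r : ℝ | ∃ z : ℂ, ‖z‖ = 1 ∧ r = ‖z - 1‖ ^ s * ‖P.eval z‖}

/-- Minimal weighted deviation over monic polynomials of degree `n` (free zeros). -/
noncomputable def mFree (n : ℕ) (s : ℝ) : ℝ :=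
  sInf {r : ℝ | ∃ P : Polynomial ℂ, P.Monic ∧ P.natDegree = n ∧ r = circleSup s P}

/-- Minimal weighted deviation over monic polynomials of degree `n` with all
roots on the unit circle. -/
noncomputable def mCircle (n : ℕ) (s : ℝ) : ℝ :=
  sInf {r : ℝ | ∃ P : Polynomial ℂ, P.Monic ∧ P.natDegree = n ∧
      (∀ z ∈ P.roots, ‖z‖ = 1) ∧ r = circleSup s P}

namespace MFreeAux

open Metric

def SP (s : ℝ) (P : Polynomial ℂ) : Set ℝ :=
  {r : ℝ | ∃ z : ℂ, ‖z‖ = 1 ∧ r = ‖z - 1‖ ^ s * ‖P.eval z‖}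

lemma circleSup_eq (s : ℝ) (P : Polynomial ℂ) : circleSup s P = sSup (SP s P) := rfl

lemma SP_nonempty (s : ℝ) (P : Polynomial ℂ) : (SP s P).Nonempty :=
  ⟨_, Complex.I, by simp, rfl⟩

lemma SP_bddAbove {s : ℝ} (hs : 0 ≤ s) (P : Polynomial ℂ) : BddAbove (SP s P) := by
  refine ⟨2 ^ s * ∑ i ∈ Finset.range (P.natDegree + 1), ‖P.coeff i‖, ?_⟩
  rintro r ⟨z, hz, rfl⟩
  have h1 : ‖z - 1‖ ^ s ≤ 2 ^ s := by
    apply Real.rpow_le_rpow (norm_nonneg _) ?_ hs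
    calc ‖z - 1‖ ≤ ‖z‖ + ‖(1 : ℂ)‖ := norm_sub_le _ _
      _ = 2 := by rw [hz]; norm_num
  have h2 : ‖P.eval z‖ ≤ ∑ i ∈ Finset.range (P.natDegree + 1), ‖P.coeff i‖ := by
    rw [Polynomial.eval_eq_sum_range]
    refine (norm_sum_le _ _).trans ?_
    apply Finset.sum_le_sum
    intro i _
    rw [norm_mul, norm_pow, hz, one_pow, mul_one]
  have h0 : (0:ℝ) ≤ ‖P.eval z‖ := norm_nonneg _
  exact mul_le_mul h1 h2 h0 (Real.rpow_nonneg (by norm_num) s)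

lemma le_circleSup {s : ℝ} (hs : 0 ≤ s) (P : Polynomial ℂ) {z : ℂ} (hz : ‖z‖ = 1) :
    ‖z - 1‖ ^ s * ‖P.eval z‖ ≤ circleSup s P :=
  le_csSup (SP_bddAbove hs P) ⟨z, hz, rfl⟩

lemma circleSup_le (s : ℝ) (P : Polynomial ℂ) {B : ℝ}
    (hB : ∀ z : ℂ, ‖z‖ = 1 → ‖z - 1‖ ^ s * ‖P.eval z‖ ≤ B) : circleSup s P ≤ B :=
  csSup_le (SP_nonempty s P) (by rintro r ⟨z, hz, rfl⟩; exact hB z hz)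

lemma circleSup_nonneg {s : ℝ} (hs : 0 ≤ s) (P : Polynomial ℂ) : 0 ≤ circleSup s P := by
  have h := le_circleSup hs P (z := Complex.I) (by simp)
  have h0 : (0:ℝ) ≤ ‖Complex.I - 1‖ ^ s * ‖P.eval Complex.I‖ := by positivity
  linarith

lemma exists_one_le_norm_eval (Q : Polynomial ℂ) (hQ : Q.Monic) :
    ∃ z : ℂ, ‖z‖ = 1 ∧ 1 ≤ ‖Q.eval z‖ := by
  set R := Q.reverse with hRdef
  have hsph : (Metric.sphere (0 : ℂ) 1).Nonempty := NormedSpace.sphere_nonempty.2 zero_le_one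
  have hcont : ContinuousOn (fun z : ℂ => ‖R.eval z‖) (Metric.sphere 0 1) :=
    ((R.continuous_aeval).norm).continuousOn
  obtain ⟨w, hw, hwmax⟩ := (isCompact_sphere (0:ℂ) 1).exists_isMaxOn hsph hcont
  have hw1 : ‖w‖ = 1 := by simpa using hw
  have h0 : ‖R.eval 0‖ ≤ ‖R.eval w‖ := by
    apply Complex.norm_le_of_forall_mem_frontier_norm_le (U := Metric.ball (0:ℂ) 1)
      Metric.isBounded_ball (R.differentiable.diffContOnCl)
    · intro z hz
      rw [frontier_ball (0:ℂ) one_ne_zero] at hz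
      exact hwmax hz
    · exact subset_closure (Metric.mem_ball_self one_pos)
  have hR0 : R.eval 0 = 1 := by
    rw [← Polynomial.coeff_zero_eq_eval_zero, hRdef, Polynomial.coeff_zero_reverse]
    exact hQ
  have h1 : 1 ≤ ‖R.eval w‖ := by
    rw [hR0] at h0; simpa using h0
  have hw0 : w ≠ 0 := by
    intro h; rw [h] at hw1; simp at hw1
  refine ⟨w⁻¹, by rw [norm_inv, hw1]; norm_num, ?_⟩
  haveI : Invertible (w⁻¹) := invertibleOfNonzero (inv_ne_zero hw0)
  have hident := Polynomial.eval₂_reverse_mul_pow (RingHom.id ℂ) (w⁻¹) Q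
  have hinv : (⅟ (w⁻¹) : ℂ) = w := by rw [invOf_eq_inv, inv_inv]
  rw [hinv] at hident
  have hident' : R.eval w * (w⁻¹) ^ Q.natDegree = Q.eval (w⁻¹) := hident
  have hnorm : ‖Q.eval (w⁻¹)‖ = ‖R.eval w‖ * ‖w⁻¹‖ ^ Q.natDegree := by
    rw [← hident', norm_mul, norm_pow]
  rw [hnorm, norm_inv, hw1]
  simpa using h1


lemma one_le_circleSup {s : ℝ} (hs : 0 ≤ s) {P : Polynomial ℂ} (hP : P.Monic) :
    1 ≤ circleSup s P := by
  by_contra hlt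
  push_neg at hlt
  set c := circleSup s P with hc
  set η : ℝ := (1 - c) / 2 with hηdef
  have hη0 : 0 < η := by simp only [hηdef]; linarith
  have hc2 : c < 2 ^ (-η) := by
    have hlog2 : Real.log 2 ≤ 1 := by
      have := Real.log_le_sub_one_of_pos (by norm_num : (0:ℝ) < 2)
      linarith
    have hlog2' : 0 ≤ Real.log 2 := Real.log_nonneg one_le_two
    have hexp : 1 - η * Real.log 2 ≤ Real.exp (Real.log 2 * (-η)) := by
      have := Real.add_one_le_exp (Real.log 2 * (-η))
      linarith
    have h2 : (2:ℝ) ^ (-η) = Real.exp (Real.log 2 * (-η)) :=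
      Real.rpow_def_of_pos (by norm_num) _
    have : 1 - η ≤ (2:ℝ) ^ (-η) := by
      rw [h2]
      have : 1 - η ≤ 1 - η * Real.log 2 := by nlinarith
      linarith
    have : c < 1 - η := by simp only [hηdef]; linarith
    linarith [this]
  obtain ⟨r, hr1, hr2⟩ := exists_rat_btwn (lt_add_of_pos_right s hη0)
  have hrpos : 0 < (r : ℝ) := lt_of_le_of_lt hs hr1
  set p : ℕ := r.num.toNat with hpdef
  set q : ℕ := r.den with hqdef
  have hq0 : 0 < q := r.pos
  have hnum : 0 < r.num := Rat.num_pos.2 (by exact_mod_cast hrpos)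
  have hp0 : 0 < p := by simp only [hpdef]; omega
  have hpq : (p : ℝ) / (q : ℝ) = (r : ℝ) := by
    rw [Rat.cast_def]
    congr 1
    · simp only [hpdef]
      exact_mod_cast Int.toNat_of_nonneg hnum.le
  obtain ⟨z, hz1, hz2⟩ := exists_one_le_norm_eval ((X - C 1) ^ p * P ^ q)
    (((monic_X_sub_C (1:ℂ)).pow p).mul (hP.pow q))
  rw [Polynomial.eval_mul, Polynomial.eval_pow, Polynomial.eval_pow, Polynomial.eval_sub,
    Polynomial.eval_X, Polynomial.eval_C, norm_mul, norm_pow, norm_pow] at hz2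
  set t := ‖z - 1‖ with htdef
  set A := ‖P.eval z‖ with hAdef
  have ht0 : 0 < t := by
    rcases eq_or_lt_of_le (norm_nonneg (z - 1)) with h | h
    · exfalso
      rw [← htdef] at h
      rw [← h, zero_pow hp0.ne', zero_mul] at hz2
      linarith
    · exact h
  have hA0 : 0 ≤ A := norm_nonneg _
  have ht2 : t ≤ 2 := by
    simp only [htdef]
    calc ‖z - 1‖ ≤ ‖z‖ + ‖(1:ℂ)‖ := norm_sub_le _ _
      _ = 2 := by rw [hz1]; norm_num
  set e : ℝ := (p : ℝ) / (q : ℝ) with hedef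
  have hx : 1 ≤ t ^ e * A := by
    have hte : 0 ≤ t ^ e := Real.rpow_nonneg ht0.le _
    have hxq : (t ^ e * A) ^ q = t ^ p * A ^ q := by
      rw [mul_pow]
      congr 1
      rw [← Real.rpow_natCast (t ^ e) q, ← Real.rpow_mul ht0.le]
      have : e * (q : ℝ) = (p : ℝ) := by
        rw [hedef]; exact div_mul_cancel₀ _ (by exact_mod_cast hq0.ne')
      rw [this, Real.rpow_natCast]
    by_contra hcon
    push_neg at hcon
    have : (t ^ e * A) ^ q < 1 := pow_lt_one₀ (by positivity) hcon hq0.ne'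
    rw [hxq] at this
    linarith
  have key : (2:ℝ) ^ (-η) ≤ t ^ s * A := by
    have h1 : t ^ s = t ^ (s - e) * t ^ e := by
      rw [← Real.rpow_add ht0]; ring_nf
    have hse : s - e ≤ 0 := by
      have : s < e := by rw [hpq]; exact hr1
      linarith
    have h2 : (2:ℝ) ^ (s - e) ≤ t ^ (s - e) :=
      Real.rpow_le_rpow_of_nonpos ht0 ht2 hse
    have h3 : (2:ℝ) ^ (-η) ≤ (2:ℝ) ^ (s - e) := by
      apply Real.rpow_le_rpow_of_exponent_le one_le_two
      have : e < s + η := by rw [hpq]; exact hr2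
      linarith
    calc (2:ℝ) ^ (-η) ≤ (2:ℝ) ^ (s - e) := h3
      _ ≤ t ^ (s - e) := h2
      _ ≤ t ^ (s - e) * (t ^ e * A) := le_mul_of_one_le_right (Real.rpow_nonneg ht0.le _) hx
      _ = t ^ s * A := by rw [h1]; ring
  have hfin : (2:ℝ) ^ (-η) ≤ c := key.trans (le_circleSup hs P hz1)
  linarith


lemma exists_upper {s : ℝ} (hs : 0 ≤ s) {ε : ℝ} (hε : 0 < ε) :
    ∃ K : ℕ, 1 ≤ K ∧ ∀ n, K ≤ n →
      ∃ P : Polynomial ℂ, P.Monic ∧ P.natDegree = n ∧ circleSup s P ≤ 1 + ε := by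
  -- choose δ
  obtain ⟨δ, hδ0, hδs⟩ : ∃ δ : ℝ, 0 < δ ∧ (1 + δ) ^ s ≤ 1 + ε / 2 := by
    have hcont : ContinuousAt (fun x : ℝ => x ^ s) 1 :=
      Real.continuousAt_rpow_const 1 s (Or.inl one_ne_zero)
    have h1 : (1 : ℝ) ^ s = 1 := Real.one_rpow s
    have htd := hcont.tendsto
    rw [h1] at htd
    have hev : ∀ᶠ x : ℝ in nhds 1, x ^ s < 1 + ε / 2 :=
      htd.eventually_lt_const (by linarith)
    obtain ⟨δ', hδ', h⟩ := Metric.eventually_nhds_iff.mp hev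
    refine ⟨δ' / 2, by positivity, le_of_lt (h ?_)⟩
    rw [Real.dist_eq]
    rw [show (1 + δ'/2 - 1 : ℝ) = δ'/2 by ring, abs_of_pos (by positivity)]
    linarith
  set ρ : ℝ := 1 + δ with hρdef
  have hρ1 : (1:ℝ) < ρ := by simp [hρdef]; linarith
  have hρ0 : (0:ℝ) < ρ := by linarith
  have hρC : (ρ : ℂ) ≠ 0 := by exact_mod_cast hρ0.ne'
  set F : ℂ → ℂ := fun w => (1 - w * (ρ : ℂ)⁻¹) ^ ((-s : ℝ) : ℂ) with hFdef
  -- base properties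
  have hbase_re : ∀ w : ℂ, ‖w‖ < ρ → 0 < (1 - w * (ρ : ℂ)⁻¹).re := by
    intro w hw
    have : (1 - w * (ρ : ℂ)⁻¹).re = 1 - w.re * ρ⁻¹ := by
      simp [Complex.sub_re, Complex.mul_re, ← Complex.ofReal_inv]
    rw [this]
    have h1 : w.re ≤ ‖w‖ := Complex.re_le_norm w
    have h2 : w.re * ρ⁻¹ < ρ * ρ⁻¹ := by
      apply mul_lt_mul_of_pos_right (lt_of_le_of_lt h1 hw) (inv_pos.2 hρ0)
    rw [mul_inv_cancel₀ hρ0.ne'] at h2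
    linarith
  have hbase_ne : ∀ w : ℂ, ‖w‖ < ρ → (1 - w * (ρ : ℂ)⁻¹) ≠ 0 := by
    intro w hw h
    have := hbase_re w hw
    rw [h] at this
    simp at this
  -- radii
  set R : NNReal := Real.toNNReal (1 + δ / 2) with hRdef
  have hRcoe : (R : ℝ) = 1 + δ / 2 := Real.coe_toNNReal _ (by positivity)
  have hRρ : (R : ℝ) < ρ := by rw [hRcoe, hρdef]; linarith
  have hdiff : DifferentiableOn ℂ F (Metric.closedBall 0 (R : ℝ)) := by
    intro w hw
    have hwn : ‖w‖ ≤ (R : ℝ) := by simpa [Metric.mem_closedBall] using hw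
    have hwρ : ‖w‖ < ρ := lt_of_le_of_lt hwn hRρ
    apply DifferentiableAt.differentiableWithinAt
    apply DifferentiableAt.cpow
    · apply DifferentiableAt.sub (differentiableAt_const _)
      exact (differentiableAt_id.mul (differentiableAt_const _))
    · exact differentiableAt_const _
    · exact Or.inl (hbase_re w hwρ)
  have hR0 : 0 < R := by
    rw [hRdef]
    exact Real.toNNReal_pos.2 (by positivity)
  have hps := hdiff.hasFPowerSeriesOnBall hR0
  set pS := cauchyPowerSeries F 0 R with hpSdef
  -- coefficient zero
  have hF0 : F 0 = 1 := by
    simp only [hFdef, zero_mul, sub_zero]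
    exact Complex.one_cpow _
  have hc0 : pS.coeff 0 = 1 := by
    have h := hps.coeff_zero (fun _ => 0)
    rw [hF0] at h
    rw [FormalMultilinearSeries.coeff]
    convert h using 2
  -- uniform convergence on ball of radius 1 + δ/4
  set r' : NNReal := Real.toNNReal (1 + δ / 4) with hr'def
  have hr'coe : (r' : ℝ) = 1 + δ / 4 := Real.coe_toNNReal _ (by positivity)
  have hr'R : (r' : ℝ≥0∞) < (R : ℝ≥0∞) := by
    rw [ENNReal.coe_lt_coe, ← NNReal.coe_lt_coe, hRcoe, hr'coe]
    linarith
  have hunif := hps.tendstoUniformlyOn hr'R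
  rw [Metric.tendstoUniformlyOn_iff] at hunif
  have h2s : (0:ℝ) < 2 ^ s + 1 := by positivity
  set ε' : ℝ := ε / (2 * (2 ^ s + 1)) with hε'def
  have hε'0 : 0 < ε' := by simp only [hε'def]; positivity
  obtain ⟨K₀, hK₀⟩ := eventually_atTop.mp (hunif ε' hε'0)
  set K := max K₀ 1 with hKdef
  have hK : ∀ y ∈ Metric.ball (0:ℂ) (r' : ℝ), dist (F (0 + y)) (pS.partialSum K y) < ε' :=
    hK₀ K (le_max_left _ _)
  refine ⟨K, le_max_right _ _, ?_⟩
  intro n hn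
  set P : Polynomial ℂ := ∑ i ∈ Finset.range K, C (pS.coeff i) * X ^ (n - i) with hPdef
  have hcoeffn : P.coeff n = 1 := by
    rw [hPdef, Polynomial.finset_sum_coeff]
    rw [Finset.sum_eq_single 0]
    · simp [hc0]
    · intro i hi hne
      have hiK : i < K := Finset.mem_range.mp hi
      have : ¬(n = n - i) := by omega
      simp [Polynomial.coeff_C_mul, Polynomial.coeff_X_pow, this]
    · intro h
      exfalso
      exact h (Finset.mem_range.mpr (by omega))
  have hdeg_le : P.natDegree ≤ n := by
    rw [hPdef]
    apply Polynomial.natDegree_sum_le_of_forall_le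
    intro i hi
    exact (Polynomial.natDegree_C_mul_X_pow_le _ _).trans (by omega)
  have hmon : P.Monic := Polynomial.monic_of_natDegree_le_of_coeff_eq_one n hdeg_le hcoeffn
  have hdeg : P.natDegree = n :=
    le_antisymm hdeg_le (Polynomial.le_natDegree_of_ne_zero (by rw [hcoeffn]; exact one_ne_zero))
  refine ⟨P, hmon, hdeg, ?_⟩
  apply circleSup_le
  intro z hz
  have hz0 : z ≠ 0 := by
    intro h; rw [h] at hz; simp at hz
  set w : ℂ := z⁻¹ with hwdef
  have hw1 : ‖w‖ = 1 := by rw [hwdef, norm_inv, hz]; norm_num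
  have hwball : w ∈ Metric.ball (0:ℂ) (r' : ℝ) := by
    rw [Metric.mem_ball, dist_zero_right, hw1, hr'coe]
    linarith
  -- eval identity
  have heval : P.eval z = z ^ n * pS.partialSum K w := by
    rw [hPdef, Polynomial.eval_finset_sum]
    rw [FormalMultilinearSeries.partialSum, Finset.mul_sum]
    apply Finset.sum_congr rfl
    intro i hi
    have hiK : i < K := Finset.mem_range.mp hi
    have hin : i ≤ n := by omega
    rw [FormalMultilinearSeries.apply_eq_pow_smul_coeff, smul_eq_mul]
    rw [Polynomial.eval_mul, Polynomial.eval_C, Polynomial.eval_pow, Polynomial.eval_X]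
    rw [pow_sub₀ z hz0 hin, hwdef, inv_pow]
    ring
  have hnorm_eval : ‖P.eval z‖ = ‖pS.partialSum K w‖ := by
    rw [heval, norm_mul, norm_pow, hz, one_pow, one_mul]
  have hnorm_sub : ‖z - 1‖ = ‖w - 1‖ := by
    have : w - 1 = z⁻¹ * (1 - z) := by
      rw [hwdef]; field_simp
    rw [this, norm_mul, norm_inv, hz, inv_one, one_mul, norm_sub_rev]
  -- partial sum close to F
  have hclose : ‖pS.partialSum K w‖ ≤ ‖F w‖ + ε' := by
    have h := hK w hwball
    rw [zero_add, dist_eq_norm] at h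
    calc ‖pS.partialSum K w‖ = ‖F w - (F w - pS.partialSum K w)‖ := by ring_nf
      _ ≤ ‖F w‖ + ‖F w - pS.partialSum K w‖ := norm_sub_le _ _
      _ ≤ ‖F w‖ + ε' := by linarith
  -- the key pointwise bound
  have hkey : ‖w - 1‖ ^ s * ‖F w‖ ≤ ρ ^ s := by
    have hwρ : ‖w‖ < ρ := by rw [hw1]; linarith
    set u : ℝ := ‖1 - w * (ρ : ℂ)⁻¹‖ with hudef
    have hu0 : 0 < u := norm_pos_iff.2 (hbase_ne w hwρ)
    have hFw : ‖F w‖ = u ^ (-s) := by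
      simp only [hFdef]
      rw [hudef]
      exact Complex.norm_cpow_real _ _
    have hle : ‖w - 1‖ ≤ ρ * u := by
      have hean : (ρ:ℂ) * (1 - w * (ρ : ℂ)⁻¹) = (ρ:ℂ) - w := by
        field_simp
      have h1 : ρ * u = ‖(ρ:ℂ) - w‖ := by
        rw [← hean, norm_mul, Complex.norm_real, Real.norm_of_nonneg hρ0.le]
      rw [h1]
      -- |w-1| ≤ |ρ - w| on circle
      have hw2 : w.re * w.re + w.im * w.im = 1 := by
        have h : Complex.normSq w = 1 := by
          rw [← Complex.sq_norm, hw1, one_pow]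
        simpa [Complex.normSq_apply] using h
      have hsq : ‖w - 1‖ ^ 2 ≤ ‖(ρ:ℂ) - w‖ ^ 2 := by
        rw [Complex.sq_norm, Complex.sq_norm]
        simp only [Complex.normSq_apply, Complex.sub_re, Complex.sub_im, Complex.ofReal_re,
          Complex.ofReal_im, Complex.one_re, Complex.one_im]
        nlinarith [hw2, hρ1, sq_nonneg w.im, sq_nonneg (w.re - 1)]
      nlinarith [hsq, norm_nonneg (w - 1), norm_nonneg ((ρ:ℂ) - w)]
    calc ‖w - 1‖ ^ s * ‖F w‖ = ‖w - 1‖ ^ s * u ^ (-s) := by rw [hFw]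
      _ ≤ (ρ * u) ^ s * u ^ (-s) := by
          apply mul_le_mul_of_nonneg_right _ (Real.rpow_nonneg hu0.le _)
          exact Real.rpow_le_rpow (norm_nonneg _) hle hs
      _ = ρ ^ s * (u ^ s * u ^ (-s)) := by
          rw [Real.mul_rpow hρ0.le hu0.le]; ring
      _ = ρ ^ s := by
          rw [← Real.rpow_add hu0, add_neg_cancel, Real.rpow_zero, mul_one]
  -- conclude
  have h2sb : ‖w - 1‖ ^ s ≤ 2 ^ s := by
    apply Real.rpow_le_rpow (norm_nonneg _) _ hs
    calc ‖w - 1‖ ≤ ‖w‖ + ‖(1:ℂ)‖ := norm_sub_le _ _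
      _ = 2 := by rw [hw1]; norm_num
  have hε'b : (2:ℝ) ^ s * ε' ≤ ε / 2 := by
    have h2spos : (0:ℝ) < 2 ^ s := by positivity
    rw [hε'def, ← mul_div_assoc, div_le_div_iff₀ (by positivity) (by norm_num : (0:ℝ) < 2)]
    nlinarith
  calc ‖z - 1‖ ^ s * ‖P.eval z‖ = ‖w - 1‖ ^ s * ‖pS.partialSum K w‖ := by
        rw [hnorm_sub, hnorm_eval]
    _ ≤ ‖w - 1‖ ^ s * (‖F w‖ + ε') := by
        apply mul_le_mul_of_nonneg_left hclose (Real.rpow_nonneg (norm_nonneg _) _)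
    _ = ‖w - 1‖ ^ s * ‖F w‖ + ‖w - 1‖ ^ s * ε' := by ring
    _ ≤ ρ ^ s + 2 ^ s * ε' := by
        apply add_le_add hkey
        exact mul_le_mul_of_nonneg_right h2sb hε'0.le
    _ ≤ (1 + ε / 2) + ε / 2 := add_le_add hδs hε'b
    _ = 1 + ε := by ring


end MFreeAux

theorem mFree_tendsto_one (s : ℝ) (hs : 0 ≤ s) :
    Filter.Tendsto (fun n : ℕ => mFree n s) Filter.atTop (nhds 1) := by
  rw [Metric.tendsto_atTop]
  intro ε hε
  obtain ⟨K, hK1, hK⟩ := MFreeAux.exists_upper hs (half_pos hε)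
  refine ⟨K, fun n hn => ?_⟩
  obtain ⟨P, hPm, hPd, hPle⟩ := hK n hn
  have hlow : 1 ≤ mFree n s := by
    have hne : {r : ℝ | ∃ P : Polynomial ℂ, P.Monic ∧ P.natDegree = n ∧ r = circleSup s P}.Nonempty :=
      ⟨circleSup s (X ^ n), X ^ n, monic_X_pow n, natDegree_X_pow n, rfl⟩
    apply le_csInf hne
    rintro r ⟨Q, hQm, _, rfl⟩
    exact MFreeAux.one_le_circleSup hs hQm
  have hup : mFree n s ≤ 1 + ε / 2 := by
    refine le_trans (csInf_le ?_ ⟨P, hPm, hPd, rfl⟩) hPle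
    refine ⟨0, ?_⟩
    rintro r ⟨Q, hQm, _, rfl⟩
    exact MFreeAux.circleSup_nonneg hs Q
  rw [Real.dist_eq, abs_lt]
  constructor <;> linarith
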